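/- arXiv:2203.09682 — 2 statements merged into one kernel-verified Lean document; each statement's English description precedes it below -/
import Mathlib

section
/- Under SUTVA with fixed n_t, among all randomized saturation designs: if M S(W^+) ≥ ∑_j N_j S(W^{(j)}), the variance of the difference-in-means estimator is minimized by the constant vector π = (n_t/N,…,n_t/N) (stratified design); if M S(W^+) ≤ ∑_j N_j S(W^{(j)}), it is minimized by any π ∈ {0,1}^M with mean n_t/N (cluster-based design). -/
lemma expand_sum {M : ℕ} (p : ℝ) (π : Fin M → ℝ) :
    ∑ j, (π j - p) ^ 2 = (∑ j, π j ^ 2) - 2 * p * (∑ j, π j) + M * p ^ 2 := by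
  have h : ∀ j : Fin M, (π j - p) ^ 2 = π j ^ 2 - 2 * p * π j + p ^ 2 := by
    intro j; ring
  simp only [h]
  rw [Finset.sum_add_distrib, Finset.sum_sub_distrib, ← Finset.mul_sum,
    Finset.sum_const, Finset.card_univ, Fintype.card_fin, nsmul_eq_mul]

/-- Under SUTVA with fixed n_t, the variance of the
difference-in-means estimator under a randomized saturation design equals
A + B·Var[π] with A = (1/(n_t n_c))∑_j N_j S(W^{(j)}) and
B = (N²/(n_t²n_c²))[M S(W⁺) − ∑_j N_j S(W^{(j)})]. If M S(W⁺) ≥ ∑_j N_j S(W^{(j)})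
it is minimized over admissible π (coordinates in [0,1], mean n_t/N) by the
constant vector n_t/N (stratified design); if M S(W⁺) ≤ ∑_j N_j S(W^{(j)}) it is
minimized by any {0,1}-valued π with mean n_t/N (cluster-based design). -/
theorem stmt9 (M K nt : ℕ) (hM : 2 ≤ M) (hK : 2 ≤ K)
    (Y1 Y0 : Fin M → Fin K → ℝ)
    (hnt : 0 < nt) (hnc : nt < M * K) :
    let N : ℕ := M * K
    let nc : ℕ := N - nt
    let W : Fin M → Fin K → ℝ := fun j i => ((nt : ℝ) / N) * Y0 j i + ((nc : ℝ) / N) * Y1 j i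
    let SW : Fin M → ℝ := fun j => (∑ i, (W j i - (∑ i', W j i') / K) ^ 2) / ((K : ℝ) - 1)
    let Wp : Fin M → ℝ := fun j => ∑ i, W j i
    let SWp : ℝ := (∑ j, (Wp j - (∑ j', Wp j') / M) ^ 2) / ((M : ℝ) - 1)
    let V : (Fin M → ℝ) → ℝ := fun π =>
      (1 / ((nt : ℝ) * nc)) * ∑ j, (K : ℝ) * SW j
      + ((N : ℝ) ^ 2 / ((nt : ℝ) ^ 2 * (nc : ℝ) ^ 2))
          * ((M : ℝ) * SWp - ∑ j, (K : ℝ) * SW j)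
          * ((∑ j, (π j - (nt : ℝ) / N) ^ 2) / M)
    let admissible : (Fin M → ℝ) → Prop := fun π =>
      (∀ j, π j ∈ Set.Icc (0 : ℝ) 1) ∧ (∑ j, π j) / M = (nt : ℝ) / N
    ((∑ j, (K : ℝ) * SW j ≤ (M : ℝ) * SWp →
      ∀ π, admissible π → V (fun _ => (nt : ℝ) / N) ≤ V π) ∧
    ((M : ℝ) * SWp ≤ ∑ j, (K : ℝ) * SW j →
      ∀ π, admissible π → ∀ π01, admissible π01 → (∀ j, π01 j = 0 ∨ π01 j = 1) →
        V π01 ≤ V π)) := by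
  intro N nc W SW Wp SWp V admissible
  have hMpos : (0 : ℝ) < M := by positivity
  set p : ℝ := (nt : ℝ) / N with hp
  set S1 : ℝ := ∑ j, (K : ℝ) * SW j with hS1
  have hfac : (0 : ℝ) ≤ (N : ℝ) ^ 2 / ((nt : ℝ) ^ 2 * (nc : ℝ) ^ 2) := by positivity
  constructor
  · intro hB π hπ
    simp only [V]
    have hz : (∑ j : Fin M, ((fun _ : Fin M => p) j - p) ^ 2) = 0 := by simp
    rw [hz]
    have hS : 0 ≤ (∑ j, (π j - p) ^ 2) / M := by positivity
    have key : 0 ≤ ((N : ℝ) ^ 2 / ((nt : ℝ) ^ 2 * (nc : ℝ) ^ 2)) * ((M : ℝ) * SWp - S1)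
        * ((∑ j, (π j - p) ^ 2) / M) :=
      mul_nonneg (mul_nonneg hfac (by linarith)) hS
    simp only [zero_div, mul_zero]
    linarith
  · intro hB π hπ π01 hπ01 h01
    simp only [V]
    -- sums equal M * p
    have hMne : (M : ℝ) ≠ 0 := ne_of_gt hMpos
    have hsum : ∑ j, π j = M * p := by
      have := (div_eq_iff hMne).mp hπ.2
      linarith
    have hsum01 : ∑ j, π01 j = M * p := by
      have := (div_eq_iff hMne).mp hπ01.2
      linarith
    have hsq : ∑ j, (π j) ^ 2 ≤ ∑ j, π j := by
      apply Finset.sum_le_sum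
      intro j _
      have h1 := (hπ.1 j).1
      have h2 := (hπ.1 j).2
      nlinarith
    have hsq01 : ∑ j, (π01 j) ^ 2 = ∑ j, π01 j := by
      apply Finset.sum_congr rfl
      intro j _
      rcases h01 j with h | h <;> rw [h] <;> ring
    have hcomp : ∑ j, (π j - p) ^ 2 ≤ ∑ j, (π01 j - p) ^ 2 := by
      rw [expand_sum, expand_sum, hsum, hsum01, hsq01, hsum01]
      linarith
    have hCD : ((N : ℝ) ^ 2 / ((nt : ℝ) ^ 2 * (nc : ℝ) ^ 2)) * ((M : ℝ) * SWp - S1) ≤ 0 :=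
      mul_nonpos_of_nonneg_of_nonpos hfac (by linarith)
    have hdiv : (∑ j, (π j - p) ^ 2) / M ≤ (∑ j, (π01 j - p) ^ 2) / M := by
      gcongr
    have := mul_le_mul_of_nonpos_left hdiv hCD
    linarith
end

section
/- Let π ∈ [0,1]^M be a vector symmetric about its mean μ = n_t/N ≤ 1/2 with each coordinate in [0, 2μ]. Then the kurtosis gap satisfies 0 ≤ μ_{4c}[π] − Var²[π] ≤ μ² Var[π] − Var²[π], where μ_{kc}[π] is the k-th empirical central moment; the lower bound is attained when all (π_j − μ)² are equal and the upper bound when every π_j ∈ {0, μ, 2μ}. -/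
/-- For π ∈ [0,2μ]^M symmetric about its mean μ ≤ 1/2, the kurtosis
gap satisfies 0 ≤ μ₄c[π] − Var²[π] ≤ μ²·Var[π] − Var²[π]; the lower bound is
attained when all (π_j−μ)² are equal, and the upper when every π_j ∈ {0, μ, 2μ}. -/
theorem stmt13 (M : ℕ) (hM : 1 ≤ M) (μ : ℝ) (hμ0 : 0 ≤ μ) (hμ : μ ≤ 1 / 2)
    (π : Fin M → ℝ) (hbound : ∀ j, π j ∈ Set.Icc 0 (2 * μ))
    (hmean : (∑ j, π j) / M = μ)
    (hsym : ∀ j : Fin M, π j + π j.rev = 2 * μ) :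
    let Varπ : ℝ := (∑ j, (π j - μ) ^ 2) / M
    let μ4c : ℝ := (∑ j, (π j - μ) ^ 4) / M
    (0 ≤ μ4c - Varπ ^ 2) ∧
    (μ4c - Varπ ^ 2 ≤ μ ^ 2 * Varπ - Varπ ^ 2) ∧
    ((∀ j j' : Fin M, (π j - μ) ^ 2 = (π j' - μ) ^ 2) → μ4c - Varπ ^ 2 = 0) ∧
    ((∀ j, π j = 0 ∨ π j = μ ∨ π j = 2 * μ) → μ4c - Varπ ^ 2 = μ ^ 2 * Varπ - Varπ ^ 2) := by
  intro Varπ μ4c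
  have hMpos : (0:ℝ) < M := by exact_mod_cast Nat.lt_of_lt_of_le Nat.zero_lt_one hM
  set S : ℝ := ∑ j, (π j - μ) ^ 2 with hS
  set T : ℝ := ∑ j, (π j - μ) ^ 4 with hT
  have key : S ^ 2 ≤ M * T := by
    have h := sq_sum_le_card_mul_sum_sq (s := (Finset.univ : Finset (Fin M)))
      (f := fun j => (π j - μ) ^ 2)
    have h2 : ∀ j : Fin M, ((π j - μ) ^ 2) ^ 2 = (π j - μ) ^ 4 := fun j => by ring
    simpa [hS, hT, h2, Finset.card_univ] using h
  have hrw : μ4c - Varπ ^ 2 = (M * T - S ^ 2) / (M : ℝ) ^ 2 := by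
    show T / M - (S / M) ^ 2 = _
    field_simp
  refine ⟨?_, ?_, ?_, ?_⟩
  · rw [hrw]
    exact div_nonneg (by linarith) (by positivity)
  · -- reduces to T ≤ μ^2 * S
    have hpt : ∀ j : Fin M, (π j - μ) ^ 4 ≤ μ ^ 2 * (π j - μ) ^ 2 := by
      intro j
      obtain ⟨h1, h2⟩ := hbound j
      have hsq : (π j - μ) ^ 2 ≤ μ ^ 2 := by nlinarith
      nlinarith [mul_nonneg (sub_nonneg.mpr hsq) (sq_nonneg (π j - μ))]
    have hsum : T ≤ μ ^ 2 * S := by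
      rw [hS, hT, Finset.mul_sum]
      exact Finset.sum_le_sum fun j _ => hpt j
    have : μ4c ≤ μ ^ 2 * Varπ := by
      show T / M ≤ μ ^ 2 * (S / M)
      rw [← mul_div_assoc]
      exact (div_le_div_iff_of_pos_right hMpos).mpr hsum
    linarith
  · intro hall
    have j0 : Fin M := ⟨0, hM⟩
    set c : ℝ := (π j0 - μ) ^ 2 with hc
    have hSc : S = M * c := by
      rw [hS, Finset.sum_congr rfl fun j _ => hall j j0]
      simp [Finset.card_univ, mul_comm]
      exact Or.inl rfl
    have hTc : T = M * c ^ 2 := by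
      have : ∀ j : Fin M, (π j - μ) ^ 4 = c ^ 2 := fun j => by
        rw [hc, ← hall j j0]; ring
      rw [hT, Finset.sum_congr rfl fun j _ => this j]
      simp [Finset.card_univ, mul_comm]
    rw [hrw, hSc, hTc]
    field_simp
    ring
  · intro hall
    have hTS : T = μ ^ 2 * S := by
      rw [hS, hT, Finset.mul_sum]
      refine Finset.sum_congr rfl fun j _ => ?_
      rcases hall j with h | h | h <;> rw [h] <;> ring
    have : μ4c = μ ^ 2 * Varπ := by
      show T / M = μ ^ 2 * (S / M)
      rw [hTS, mul_div_assoc]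
    linarith
end
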